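/- Let ξ > 0 be real. For N > 0 define D''(N) = √( (2N + ξ + 1)² − 4N(N+1) ) and I_c(N) = h(N + ξ) − h( (D''(N) + ξ − 1)/2 ) − h( (D''(N) − ξ − 1)/2 ). Then lim_{N→∞} I_c(N) = −log₂(e·ξ). (I_c(N) is the coherent information of the state obtained by sending half of a two-mode squeezed vacuum with local mean photon number N through the additive Gaussian noise channel of parameter ξ.) -/

import Mathlib

/-- The bosonic entropy `h(x) = (x+1)·log₂(x+1) − x·log₂ x` (with `h(0) = 0`,
which holds automatically since `Real.logb 2 0 = 0`). -/
noncomputable def bosonicEntropy (x : ℝ) : ℝ :=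
  (x + 1) * Real.logb 2 (x + 1) - x * Real.logb 2 x

open Filter Real Topology

lemma aux_sqrt_atTop : Filter.Tendsto Real.sqrt Filter.atTop Filter.atTop := by
  apply tendsto_atTop_atTop.2
  intro b
  refine ⟨b ^ 2, fun a ha => ?_⟩
  exact Real.le_sqrt_of_sq_le ha

lemma aux_h_sub_logb :
    Filter.Tendsto (fun x : ℝ => bosonicEntropy x - Real.logb 2 x) Filter.atTop
      (nhds (Real.logb 2 (Real.exp 1))) := by
  have hlog2 : Real.log 2 ≠ 0 := ne_of_gt (Real.log_pos one_lt_two)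
  have h1 : Tendsto (fun x : ℝ => x * Real.log (1 + 1 / x)) atTop (nhds 1) := by
    simpa using Real.tendsto_mul_log_one_add_div_atTop 1
  have h0 : Tendsto (fun x : ℝ => (1 : ℝ) + 1 / x) atTop (nhds 1) := by
    have hi : Tendsto (fun x : ℝ => 1 / x) atTop (nhds (0:ℝ)) := by
      simpa [one_div] using tendsto_inv_atTop_zero (𝕜 := ℝ)
    simpa using (tendsto_const_nhds : Tendsto (fun _ : ℝ => (1:ℝ)) atTop (nhds 1)).add hi
  have h2 : Tendsto (fun x : ℝ => Real.log (1 + 1 / x)) atTop (nhds 0) := by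
    have := (Real.continuousAt_log (by norm_num : (1:ℝ) ≠ 0)).tendsto.comp h0
    simpa [Function.comp_def] using this
  have h3 : Tendsto (fun x : ℝ => (x + 1) * Real.log (1 + 1 / x)) atTop (nhds 1) := by
    have := h1.add h2
    simp only [add_zero] at this
    refine this.congr fun x => ?_
    ring
  have h4 : Tendsto (fun x : ℝ => (x + 1) * Real.log (1 + 1 / x) / Real.log 2) atTop
      (nhds (1 / Real.log 2)) := h3.div_const _
  have heq : ∀ᶠ x : ℝ in atTop, (x + 1) * Real.log (1 + 1 / x) / Real.log 2
      = bosonicEntropy x - Real.logb 2 x := by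
    filter_upwards [eventually_gt_atTop 0] with x hx
    have hx0 : x ≠ 0 := ne_of_gt hx
    have hx1 : (1:ℝ) + 1 / x = (x + 1) / x := by field_simp
    rw [hx1, Real.log_div (by positivity) hx0]
    unfold bosonicEntropy Real.logb
    field_simp
    ring
  have hval : Real.logb 2 (Real.exp 1) = 1 / Real.log 2 := by
    rw [Real.logb, Real.log_exp, one_div]
  rw [hval]
  exact h4.congr' heq

/-- For the additive Gaussian noise channel of parameter `ξ > 0`, the coherent information
`I_c(N)` of the output of half a two-mode squeezed vacuum with local mean photon number `N`
tends to `−log₂(e·ξ)` as `N → ∞`. -/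
theorem stmt9 (xi : ℝ) (hxi : 0 < xi) :
    Filter.Tendsto (fun N : ℝ =>
        bosonicEntropy (N + xi)
          - bosonicEntropy
            ((Real.sqrt ((2 * N + xi + 1) ^ 2 - 4 * N * (N + 1)) + xi - 1) / 2)
          - bosonicEntropy
            ((Real.sqrt ((2 * N + xi + 1) ^ 2 - 4 * N * (N + 1)) - xi - 1) / 2))
      Filter.atTop
      (nhds (-Real.logb 2 (Real.exp 1 * xi))) := by
  set c : ℝ := Real.logb 2 (Real.exp 1) with hc
  set A : ℝ → ℝ := fun N => N + xi with hA
  set B : ℝ → ℝ := fun N =>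
    (Real.sqrt ((2 * N + xi + 1) ^ 2 - 4 * N * (N + 1)) + xi - 1) / 2 with hB
  set C : ℝ → ℝ := fun N =>
    (Real.sqrt ((2 * N + xi + 1) ^ 2 - 4 * N * (N + 1)) - xi - 1) / 2 with hCdef
  -- inner expression tends to atTop
  have hinner : Tendsto (fun N : ℝ => (2 * N + xi + 1) ^ 2 - 4 * N * (N + 1)) atTop atTop := by
    have : Tendsto (fun N : ℝ => 4 * xi * N + (xi + 1) ^ 2) atTop atTop := by
      apply tendsto_atTop_add_const_right
      exact (tendsto_id (α := ℝ)).const_mul_atTop (by positivity)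
    refine this.congr fun N => ?_
    ring
  have hsqrt : Tendsto (fun N : ℝ =>
      Real.sqrt ((2 * N + xi + 1) ^ 2 - 4 * N * (N + 1))) atTop atTop :=
    aux_sqrt_atTop.comp hinner
  have hAtop : Tendsto A atTop atTop := tendsto_atTop_add_const_right _ _ tendsto_id
  have hBtop : Tendsto B atTop atTop := by
    apply Tendsto.atTop_div_const (by norm_num : (0:ℝ) < 2)
    exact tendsto_atTop_add_const_right _ _ (tendsto_atTop_add_const_right _ _ hsqrt)
  have hCtop : Tendsto C atTop atTop := by
    apply Tendsto.atTop_div_const (by norm_num : (0:ℝ) < 2)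
    exact tendsto_atTop_add_const_right _ _ (tendsto_atTop_add_const_right _ _ hsqrt)
  have t1 := aux_h_sub_logb.comp hAtop
  have t2 := aux_h_sub_logb.comp hBtop
  have t3 := aux_h_sub_logb.comp hCtop
  -- the ratio A / (B*C) tends to 1/xi
  have hratio : Tendsto (fun N : ℝ => A N / (B N * C N)) atTop (nhds (1 / xi)) := by
    have hGcont : Tendsto (fun u : ℝ =>
        (4 + 4 * xi * u) / (4 * xi + (2 * xi + 2) * u
          - 2 * Real.sqrt (4 * xi * u + ((xi + 1) * u) ^ 2))) (nhds 0) (nhds (1 / xi)) := by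
      have hnum : Tendsto (fun u : ℝ => 4 + 4 * xi * u) (nhds 0) (nhds 4) := by
        have hcont : Continuous (fun u : ℝ => 4 + 4 * xi * u) := by continuity
        have := hcont.tendsto (0:ℝ)
        simpa using this
      have hden : Tendsto (fun u : ℝ => 4 * xi + (2 * xi + 2) * u
          - 2 * Real.sqrt (4 * xi * u + ((xi + 1) * u) ^ 2)) (nhds 0) (nhds (4 * xi)) := by
        have hcont : Continuous (fun u : ℝ => 4 * xi + (2 * xi + 2) * u
            - 2 * Real.sqrt (4 * xi * u + ((xi + 1) * u) ^ 2)) := by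
          continuity
        have := hcont.tendsto (0:ℝ)
        simpa using this
      have := hnum.div hden (by positivity)
      convert this using 2
      · rfl
      rw [eq_div_iff (by positivity : (4:ℝ) * xi ≠ 0)]
      field_simp
    have hinv : Tendsto (fun N : ℝ => 1 / N) atTop (nhds 0) := by
      simpa [one_div] using tendsto_inv_atTop_zero (𝕜 := ℝ)
    have hcomp := hGcont.comp hinv
    refine hcomp.congr' ?_
    have hBpos := hBtop.eventually (eventually_gt_atTop 0)
    have hCpos := hCtop.eventually (eventually_gt_atTop 0)
    filter_upwards [eventually_gt_atTop 0, hBpos, hCpos] with N hN hBp hCp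
    simp only [Function.comp_apply]
    have hNne : N ≠ 0 := ne_of_gt hN
    set s : ℝ := Real.sqrt (4 * xi * (1 / N) + ((xi + 1) * (1 / N)) ^ 2) with hs
    have hD : Real.sqrt ((2 * N + xi + 1) ^ 2 - 4 * N * (N + 1)) = N * s := by
      rw [hs, show 4 * xi * (1 / N) + ((xi + 1) * (1 / N)) ^ 2
          = ((2 * N + xi + 1) ^ 2 - 4 * N * (N + 1)) / N ^ 2 by field_simp; ring,
        show ((2 * N + xi + 1) ^ 2 - 4 * N * (N + 1)) / N ^ 2
          = ((2 * N + xi + 1) ^ 2 - 4 * N * (N + 1)) * (1 / N) ^ 2 by ring,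
        Real.sqrt_mul' _ (by positivity : (0:ℝ) ≤ (1/N)^2), Real.sqrt_sq (by positivity)]
      field_simp
    have hs2 : s ^ 2 = 4 * xi * (1 / N) + ((xi + 1) * (1 / N)) ^ 2 :=
      Real.sq_sqrt (by positivity)
    have hNs2 : (N * s) ^ 2 = 4 * N * xi + (xi + 1) ^ 2 := by
      rw [mul_pow, hs2]; field_simp
    have hBeq : B N = (N * s + xi - 1) / 2 := by rw [hB]; simp only; rw [hD]
    have hCeq : C N = (N * s - xi - 1) / 2 := by rw [hCdef]; simp only; rw [hD]
    have hd1 : (0:ℝ) < B N * C N := mul_pos hBp hCp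
    have hden : 4 * xi + (2 * xi + 2) * (1 / N) - 2 * s = 4 * (B N * C N) / N := by
      rw [hBeq, hCeq]
      field_simp
      linear_combination (-4) * hNs2
    have hd2 : (0:ℝ) < 4 * xi + (2 * xi + 2) * (1 / N) - 2 * s := by
      rw [hden]; positivity
    rw [eq_comm, div_eq_div_iff hd1.ne' hd2.ne', hBeq, hCeq, hA]
    field_simp
    linear_combination (-4) * hNs2
  -- the log part
  have t4 : Tendsto (fun N : ℝ => Real.logb 2 (A N) - Real.logb 2 (B N) - Real.logb 2 (C N))
      atTop (nhds (- Real.logb 2 xi)) := by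
    have hcont : Tendsto (fun N : ℝ => Real.logb 2 (A N / (B N * C N))) atTop
        (nhds (Real.logb 2 (1 / xi))) :=
      (Real.continuousAt_logb (by positivity : (1:ℝ)/xi ≠ 0)).tendsto.comp hratio
    have : Real.logb 2 (1 / xi) = - Real.logb 2 xi := by
      rw [one_div, Real.logb_inv]
    rw [← this]
    refine hcont.congr' ?_
    have hApos := hAtop.eventually (eventually_gt_atTop 0)
    have hBpos := hBtop.eventually (eventually_gt_atTop 0)
    have hCpos := hCtop.eventually (eventually_gt_atTop 0)
    filter_upwards [hApos, hBpos, hCpos] with N hAp hBp hCp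
    rw [Real.logb_div hAp.ne' (mul_pos hBp hCp).ne', Real.logb_mul hBp.ne' hCp.ne']
    ring
  have final := ((t1.sub t2).sub t3).add t4
  have hvaleq : c - c - c + (- Real.logb 2 xi) = -Real.logb 2 (Real.exp 1 * xi) := by
    rw [Real.logb_mul (Real.exp_ne_zero 1) hxi.ne', hc]
    ring
  rw [← hvaleq]
  refine final.congr fun N => ?_
  simp only [Function.comp]
  ring
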